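/- Every strictly locally testable language of width j ≥ 2 over an alphabet Σ is a maximal language of order k = 2j−1: given F_j ⊆ Σ^j defining L = Loc(F_j), there is a non-conflictual tagged k-word set Φ_k (obtained by inserting ⊙ between consecutive letters of internal j-words of F_j, and inserting a matching [ after the #-prefix and ] before the #-suffix for boundary j-words) such that Loc(F_j) = Red(Φ_k). -/

import Mathlib

/-!
Common framework from the paper "Higher-order Operator Precedence Languages":
tagged words over an alphabet `α` (with a distinguished end-mark letter
`hash`), the tag set Δ = {[, ], ⊙}, tagged `k`-word factors, conflictual sets,
the strictly-locally-testable tagged language `Loc(Φ)`, handles, reductions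
`⇝_Φ`, and the (tagged) maximal languages `RedBar Φ` / `Red Φ`.

Conventions: an end-word `⍟` is the alternating word `(#⊙)^m #` of (tagged)
length `k-2`, so that it contributes `(k-1)/2` end-marks on each side,
matching all the examples of the paper.
-/

namespace HOP

/-- The three tags `[`, `]`, `⊙`. -/
inductive Tagg : Type where
  | lb : Tagg
  | rb : Tagg
  | dot : Tagg
deriving DecidableEq

/-- Symbols: either a terminal letter of `α` or a tag. -/
abbrev Sym (α : Type) := α ⊕ Tagg

/-- The projection `σ` erasing all tags. -/
def erase {α : Type} (w : List (Sym α)) : List α := w.filterMap Sum.getLeft?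

/-- Tagged words: words in `Σ(ΔΣ)*`, i.e. alternating terminals and tags,
beginning and ending with a terminal. -/
inductive IsTagged {α : Type} : List (Sym α) → Prop where
  | single (a : α) : IsTagged [Sum.inl a]
  | cons (a : α) (t : Tagg) {w : List (Sym α)} :
      IsTagged w → IsTagged (Sum.inl a :: Sum.inr t :: w)

/-- `φ_k(w)`: the set of tagged `k`-words occurring as factors of `w`. -/
def taggedFactors {α : Type} (k : ℕ) (w : List (Sym α)) : Set (List (Sym α)) :=
  {u | u.length = k ∧ IsTagged u ∧ u <:+: w}

/-- A set of tagged words is conflictual iff it contains two distinct words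
with the same tag-erasure. -/
def Conflictual {α : Type} (S : Set (List (Sym α))) : Prop :=
  ∃ x ∈ S, ∃ y ∈ S, x ≠ y ∧ erase x = erase y

def NonConflictual {α : Type} (S : Set (List (Sym α))) : Prop := ¬ Conflictual S

/-- `S` is a set of tagged `k`-words. -/
def TaggedKWords {α : Type} (k : ℕ) (S : Set (List (Sym α))) : Prop :=
  ∀ u ∈ S, IsTagged u ∧ u.length = k

/-- `hashWord hash n = # ⊙ # ⊙ … #` with `n+1` end-marks (tagged length `2n+1`). -/
def hashWord {α : Type} (hash : α) : ℕ → List (Sym α)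
  | 0 => [Sum.inl hash]
  | n + 1 => Sum.inl hash :: Sum.inr Tagg.dot :: hashWord hash n

/-- The end-word `⍟ ∈ (#⊙)*#` used with width `k`: it has tagged length `k-2`
(for odd `k ≥ 3`), i.e. `(k-1)/2` end-marks. -/
def endwFor {α : Type} (hash : α) (k : ℕ) : List (Sym α) := hashWord hash ((k - 3) / 2)

/-- `wrap hash k w = ⍟ [ w ] ⍟`. -/
def wrap {α : Type} (hash : α) (k : ℕ) (w : List (Sym α)) : List (Sym α) :=
  endwFor hash k ++ Sum.inr Tagg.lb :: (w ++ Sum.inr Tagg.rb :: endwFor hash k)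

/-- `finalWord hash k = ⍟ ⊙ ⍟`, the target of a complete reduction. -/
def finalWord {α : Type} (hash : α) (k : ℕ) : List (Sym α) :=
  endwFor hash k ++ Sum.inr Tagg.dot :: endwFor hash k

/-- The (full-word form of the) `k`-strictly-locally-testable tagged language:
all tagged `k`-word factors belong to `Φ`.  A tagged word `w` is in `Loc(Φ)`
in the sense of the paper iff `wrap hash k w ∈ LocFull k Φ`. -/
def LocFull {α : Type} (k : ℕ) (Φ : Set (List (Sym α))) : Set (List (Sym α)) :=
  {w | IsTagged w ∧ taggedFactors k w ⊆ Φ}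

/-- `Loc(Φ)` as a set of tagged words `w` (tested on `⍟[w]⍟`). -/
def LocTagged {α : Type} (hash : α) (k : ℕ) (Φ : Set (List (Sym α))) :
    Set (List (Sym α)) :=
  {w | IsTagged w ∧ wrap hash k w ∈ LocFull k Φ}

/-- The body `x` of a handle `[x]`: a tagged word over `Σ - {#}` whose tags are
all `⊙`. -/
def IsHandleBody {α : Type} (hash : α) (x : List (Sym α)) : Prop :=
  IsTagged x ∧ (∀ t : Tagg, Sum.inr t ∈ x → t = Tagg.dot) ∧ Sum.inl hash ∉ x

/-- One reduction step `w[x]z ⇝_Φ w s z`, allowed when `[x]` is a handle and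
both source and target have all their tagged `k`-factors in `Φ`. -/
def RStep {α : Type} (hash : α) (k : ℕ) (Φ : Set (List (Sym α)))
    (u v : List (Sym α)) : Prop :=
  ∃ w x z, ∃ s : Tagg, IsHandleBody hash x ∧
    u = w ++ Sum.inr Tagg.lb :: (x ++ Sum.inr Tagg.rb :: z) ∧
    v = w ++ Sum.inr s :: z ∧
    u ∈ LocFull k Φ ∧ v ∈ LocFull k Φ

/-- `⇝*_Φ`. -/
def Reduces {α : Type} (hash : α) (k : ℕ) (Φ : Set (List (Sym α))) :
    List (Sym α) → List (Sym α) → Prop :=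
  Relation.ReflTransGen (RStep hash k Φ)

/-- The tagged maximal language `Red̄(Φ)`. -/
def RedBar {α : Type} (hash : α) (k : ℕ) (Φ : Set (List (Sym α))) :
    Set (List (Sym α)) :=
  {w | IsTagged w ∧ Reduces hash k Φ (wrap hash k w) (finalWord hash k)}

/-- The maximal language `Red(Φ) = σ(Red̄(Φ))`. -/
def Red {α : Type} (hash : α) (k : ℕ) (Φ : Set (List (Sym α))) : Set (List α) :=
  erase '' RedBar hash k Φ

/-- Length-`j` factors of a plain word. -/
def plainFactors {α : Type} (j : ℕ) (w : List α) : Set (List α) :=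
  {u | u.length = j ∧ u <:+: w}

/-- The `j`-strictly-locally-testable (plain) language `Loc(F)`, with
end-words `#^(j-1)`; as usual the language is `ε`-free and over `Σ - {#}`. -/
def LocPlain {α : Type} (hash : α) (j : ℕ) (F : Set (List α)) : Set (List α) :=
  {x | x ≠ [] ∧ hash ∉ x ∧
    plainFactors j
      (List.replicate (j - 1) hash ++ x ++ List.replicate (j - 1) hash) ⊆ F}

end HOP

namespace HOP

/-- `ũ`: insert `⊙` between consecutive letters of `u`. -/
def tilde {α : Type} : List α → List (Sym α)
  | [] => []
  | [a] => [Sum.inl a]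
  | a :: b :: rest => Sum.inl a :: Sum.inr Tagg.dot :: tilde (b :: rest)

/-- `(#⊙)^(n-1) # [` : the tagged `#`-prefix of a boundary word, followed by
the matching `[` (empty when `n = 0`). -/
def hpre {α : Type} (hash : α) : ℕ → List (Sym α)
  | 0 => []
  | n + 1 => hashWord hash n ++ [Sum.inr Tagg.lb]

/-- `] # (⊙#)^(n-1)` : the matching `]` followed by the tagged `#`-suffix of a
boundary word (empty when `n = 0`). -/
def hsuf {α : Type} (hash : α) : ℕ → List (Sym α)
  | 0 => []
  | n + 1 => Sum.inr Tagg.rb :: hashWord hash n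

/-- The tagged `(2j-1)`-word associated to the `j`-word `#^j1 v #^j2`. -/
def bt {α : Type} (hash : α) (j1 : ℕ) (v : List α) (j2 : ℕ) : List (Sym α) :=
  hpre hash j1 ++ tilde v ++ hsuf hash j2

/-- The tagged `(2j-1)`-word set `Φ_k` obtained from a `j`-word set `F_j`:
`⊙` is inserted between consecutive letters of the non-`#` part, and a
matching `[` (resp. `]`) is inserted after the `#`-prefix (resp. before the
`#`-suffix) of boundary `j`-words; the all-`#` word degenerately yields the
all-`#` tagged word `(#⊙)^(j-1)#`. -/
def sltPhi {α : Type} (hash : α) (j : ℕ) (F : Set (List α)) :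
    Set (List (Sym α)) :=
  {u | (∃ j1 v j2, j1 + v.length + j2 = j ∧ v ≠ [] ∧ hash ∉ v ∧
          (List.replicate j1 hash ++ v ++ List.replicate j2 hash) ∈ F ∧
          u = bt hash j1 v j2)
       ∨ u = hashWord hash (j - 1)}

section Aux

variable {α : Type} (hash : α)

open Classical in
/-- The tag sitting between adjacent terminals `a`, `b` in any word of `Φ_k`. -/
noncomputable def mkTag (a b : α) : Tagg :=
  if a = hash then (if b = hash then Tagg.dot else Tagg.lb)
  else (if b = hash then Tagg.rb else Tagg.dot)

/-- Canonical tagging of a plain word. -/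
noncomputable def ww : List α → List (Sym α)
  | [] => []
  | [a] => [Sum.inl a]
  | a :: b :: l => Sum.inl a :: Sum.inr (mkTag hash a b) :: ww (b :: l)

@[simp] lemma ww_nil : ww hash ([] : List α) = [] := rfl
@[simp] lemma ww_single (a : α) : ww hash [a] = [Sum.inl a] := rfl
@[simp] lemma ww_cons₂ (a b : α) (l : List α) :
    ww hash (a :: b :: l) = Sum.inl a :: Sum.inr (mkTag hash a b) :: ww hash (b :: l) := rfl

lemma length_ww : ∀ p : List α, (ww hash p).length = 2 * p.length - 1
  | [] => by simp
  | [a] => by simp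
  | a :: b :: l => by
      have ih := length_ww (b :: l)
      simp only [ww_cons₂, List.length_cons] at *
      omega

lemma isTagged_ww : ∀ p : List α, p ≠ [] → IsTagged (ww hash p)
  | [], h => absurd rfl h
  | [a], _ => IsTagged.single a
  | a :: b :: l, _ => IsTagged.cons a _ (isTagged_ww (b :: l) (by simp))

lemma erase_ww : ∀ p : List α, erase (ww hash p) = p
  | [] => rfl
  | [a] => rfl
  | a :: b :: l => by
      have ih := erase_ww (b :: l)
      simp only [ww_cons₂, erase, List.filterMap_cons] at *
      simp [ih]

@[simp] lemma mkTag_hash_hash : mkTag hash hash hash = Tagg.dot := by simp [mkTag]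

lemma ww_replicate : ∀ n : ℕ, ww hash (List.replicate (n + 1) hash) = hashWord hash n
  | 0 => by simp [hashWord]
  | n + 1 => by
      have ih := ww_replicate n
      have h2 : List.replicate (n + 1 + 1) hash = hash :: hash :: List.replicate n hash := by
        simp [List.replicate_succ]
      rw [h2, ww_cons₂, show (hash :: List.replicate n hash) = List.replicate (n + 1) hash
        from List.replicate_succ.symm, ih]
      simp [hashWord]

lemma tag_mem_ww : ∀ p : List α, hash ∉ p → ∀ t : Tagg, Sum.inr t ∈ ww hash p → t = Tagg.dot
  | [], _, t, ht => by simp at ht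
  | [a], _, t, ht => by simp at ht
  | a :: b :: l, hnh, t, ht => by
      simp only [ww_cons₂, List.mem_cons] at ht
      rcases ht with h | h | h
      · exact absurd h (by simp)
      · have ha : a ≠ hash := fun h' => hnh (by simp [h'])
        have hb : b ≠ hash := fun h' => hnh (by simp [h'])
        have : mkTag hash a b = Tagg.dot := by simp [mkTag, ha, hb]
        rw [← this]; exact Sum.inr_injective h
      · exact tag_mem_ww (b :: l) (fun h' => hnh (by simp [h'])) t h

lemma inl_mem_of_mem_erase {u : List (Sym α)} {a : α} (h : a ∈ erase u) : Sum.inl a ∈ u := by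
  obtain ⟨b, hb, hget⟩ := List.mem_filterMap.mp h
  cases b with
  | inl c => simp_all [Sum.getLeft?]
  | inr t => simp [Sum.getLeft?] at hget

lemma mem_erase_of_inl {u : List (Sym α)} {a : α} (h : Sum.inl a ∈ u) : a ∈ erase u :=
  List.mem_filterMap.mpr ⟨Sum.inl a, h, rfl⟩

end Aux

section Aux2

variable {α : Type} (hash : α)

lemma length_hashWord : ∀ n : ℕ, (hashWord hash n).length = 2 * n + 1
  | 0 => rfl
  | n + 1 => by simp [hashWord, length_hashWord n]; omega

lemma mem_hashWord : ∀ n : ℕ, ∀ x ∈ hashWord hash n, x = Sum.inl hash ∨ x = Sum.inr Tagg.dot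
  | 0, x, hx => by simp [hashWord] at hx; simp [hx]
  | n + 1, x, hx => by
      simp only [hashWord, List.mem_cons] at hx
      rcases hx with h | h | h
      · exact Or.inl h
      · exact Or.inr h
      · exact mem_hashWord n x h

lemma hashWord_append (m n : ℕ) :
    hashWord hash m ++ Sum.inr Tagg.dot :: hashWord hash n = hashWord hash (m + n + 1) := by
  induction m with
  | zero => simp [hashWord]
  | succ m ih =>
      have : m + 1 + n + 1 = (m + n + 1) + 1 := by omega
      rw [this]
      simp only [hashWord, List.cons_append, ih]

lemma ww_eq_tilde : ∀ v : List α, hash ∉ v → ww hash v = tilde v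
  | [], _ => rfl
  | [a], _ => rfl
  | a :: b :: l, h => by
      have ha : a ≠ hash := fun h' => h (by simp [h'])
      have hb : b ≠ hash := fun h' => h (by simp [h'])
      rw [ww_cons₂, show tilde (a :: b :: l) = Sum.inl a :: Sum.inr Tagg.dot :: tilde (b :: l)
        from rfl, ww_eq_tilde (b :: l) (fun h' => h (by simp [h']))]
      simp [mkTag, ha, hb]

lemma ww_append_hsuf : ∀ v : List α, v ≠ [] → hash ∉ v → ∀ n : ℕ,
    ww hash (v ++ List.replicate n hash) = tilde v ++ hsuf hash n
  | [], h, _, _ => absurd rfl h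
  | [a], _, hnh, 0 => by simp [hsuf, tilde]
  | [a], _, hnh, n + 1 => by
      have ha : a ≠ hash := by simp at hnh; exact fun h => hnh h.symm
      rw [List.replicate_succ]
      show ww hash (a :: hash :: List.replicate n hash) = tilde [a] ++ hsuf hash (n + 1)
      rw [ww_cons₂, show (hash :: List.replicate n hash) = List.replicate (n + 1) hash
        from List.replicate_succ.symm, ww_replicate]
      simp [tilde, hsuf, mkTag, ha]
  | a :: b :: l, _, hnh, n => by
      have ha : a ≠ hash := fun h' => hnh (by simp [h'])
      have hb : b ≠ hash := fun h' => hnh (by simp [h'])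
      have ih := ww_append_hsuf (b :: l) (by simp) (fun h' => hnh (by simp [h'])) n
      show ww hash (a :: b :: (l ++ List.replicate n hash)) = _
      rw [ww_cons₂, show (b :: (l ++ List.replicate n hash)) = (b :: l) ++ List.replicate n hash
        from rfl, ih]
      simp [tilde, mkTag, ha, hb]

lemma hpre_succ (n : ℕ) :
    hpre hash (n + 2) = Sum.inl hash :: Sum.inr Tagg.dot :: hpre hash (n + 1) := by
  simp [hpre, hashWord]

lemma ww_bt : ∀ (j1 : ℕ) (v : List α) (j2 : ℕ), v ≠ [] → hash ∉ v →
    ww hash (List.replicate j1 hash ++ v ++ List.replicate j2 hash) = bt hash j1 v j2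
  | 0, v, j2, hv, hnh => by
      simp only [List.replicate, List.nil_append, bt, hpre]
      exact ww_append_hsuf hash v hv hnh j2
  | 1, v, j2, hv, hnh => by
      obtain ⟨a, v', rfl⟩ : ∃ a v', v = a :: v' := by
        cases v with | nil => exact absurd rfl hv | cons a v' => exact ⟨a, v', rfl⟩
      have ha : a ≠ hash := fun h' => hnh (by simp [h'])
      show ww hash (hash :: a :: (v' ++ List.replicate j2 hash)) = _
      rw [ww_cons₂, show (a :: (v' ++ List.replicate j2 hash)) =
        (a :: v') ++ List.replicate j2 hash from rfl,
        ww_append_hsuf hash (a :: v') (by simp) hnh j2]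
      simp [bt, hpre, hashWord, mkTag, ha]
  | n + 2, v, j2, hv, hnh => by
      have ih := ww_bt (n + 1) v j2 hv hnh
      have h2 : List.replicate (n + 2) hash ++ v ++ List.replicate j2 hash =
          hash :: hash :: (List.replicate n hash ++ v ++ List.replicate j2 hash) := by
        simp [List.replicate_succ]
      have h3 : List.replicate (n + 1) hash ++ v ++ List.replicate j2 hash =
          hash :: (List.replicate n hash ++ v ++ List.replicate j2 hash) := by
        simp [List.replicate_succ]
      rw [h2, ww_cons₂, ← h3, ih]
      simp [bt, hpre_succ]

lemma drop_ww : ∀ (i : ℕ) (p : List α), (ww hash p).drop (2 * i) = ww hash (p.drop i)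
  | 0, p => by simp
  | i + 1, [] => by simp
  | i + 1, [a] => by
      rw [List.drop_eq_nil_of_le (by simp; omega), List.drop_eq_nil_of_le (by simp)]
      simp
  | i + 1, a :: b :: l => by
      have : 2 * (i + 1) = 2 * i + 1 + 1 := by omega
      rw [this, ww_cons₂, List.drop_succ_cons, List.drop_succ_cons, List.drop_succ_cons,
        drop_ww i (b :: l)]

lemma take_ww : ∀ (n : ℕ) (p : List α), (ww hash p).take (2 * n + 1) = ww hash (p.take (n + 1))
  | 0, [] => by simp
  | 0, [a] => by simp
  | 0, a :: b :: l => by simp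
  | n + 1, [] => by simp
  | n + 1, [a] => by simp
  | n + 1, a :: b :: l => by
      have : 2 * (n + 1) + 1 = (2 * n + 1) + 1 + 1 := by omega
      rw [this, ww_cons₂, List.take_succ_cons, List.take_succ_cons, take_ww n (b :: l)]
      show _ = ww hash (a :: b :: l.take n)
      rfl

end Aux2

section Aux3

variable {α : Type} (hash : α)

lemma isTagged_head {u : List (Sym α)} (h : IsTagged u) : ∃ a r, u = Sum.inl a :: r := by
  cases h with
  | single a => exact ⟨a, [], rfl⟩
  | cons a t h => exact ⟨a, _, rfl⟩

lemma erase_ne_nil {u : List (Sym α)} (h : IsTagged u) : erase u ≠ [] := by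
  obtain ⟨a, r, rfl⟩ := isTagged_head h
  simp [erase]

lemma isTagged_length_odd {u : List (Sym α)} (h : IsTagged u) : u.length % 2 = 1 := by
  induction h with
  | single a => rfl
  | cons a t h ih => simp only [List.length_cons]; omega

lemma even_of_inl {u : List (Sym α)} (h : IsTagged u) :
    ∀ (s : List (Sym α)) (a : α) (r : List (Sym α)),
      u = s ++ Sum.inl a :: r → s.length % 2 = 0 := by
  induction h with
  | single a =>
      intro s a' r hs
      match s, hs with
      | [], _ => rfl
      | x :: s, hs =>
          exfalso
          have := congrArg List.length hs
          simp only [List.length_cons, List.length_append, List.length_nil] at this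
          omega
  | cons a t htag ih =>
      intro s a' r hs
      match s, hs with
      | [], _ => rfl
      | [x], hs => simp at hs
      | x :: y :: s, hs =>
          simp only [List.cons_append, List.cons.injEq] at hs
          have := ih s a' r hs.2.2
          simp only [List.length_cons]; omega

lemma odd_of_inr {u : List (Sym α)} (h : IsTagged u) :
    ∀ (s : List (Sym α)) (t : Tagg) (r : List (Sym α)),
      u = s ++ Sum.inr t :: r → s.length % 2 = 1 := by
  induction h with
  | single a =>
      intro s t r hs
      match s, hs with
      | [], hs => simp at hs
      | x :: s, hs =>
          exfalso
          have := congrArg List.length hs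
          simp only [List.length_cons, List.length_append, List.length_nil] at this
          omega
  | cons a t htag ih =>
      intro s t' r hs
      match s, hs with
      | [], hs => simp at hs
      | [x], hs => rfl
      | x :: y :: s, hs =>
          simp only [List.cons_append, List.cons.injEq] at hs
          have := ih s t' r hs.2.2
          simp only [List.length_cons]; omega

lemma tag_context {u : List (Sym α)} (h : IsTagged u) :
    ∀ (s : List (Sym α)) (t : Tagg) (r : List (Sym α)), u = s ++ Sum.inr t :: r →
      (∃ (s' : List (Sym α)) (b : α), s = s' ++ [Sum.inl b]) ∧ (∃ (a : α) (r' : List (Sym α)), r = Sum.inl a :: r') := by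
  induction h with
  | single a =>
      intro s t r hs
      match s, hs with
      | [], hs => simp at hs
      | x :: s, hs =>
          exfalso
          have := congrArg List.length hs
          simp only [List.length_cons, List.length_append, List.length_nil] at this
          omega
  | cons a t htag ih =>
      intro s t' r hs
      match s, hs with
      | [], hs => simp at hs
      | [x], hs =>
          simp only [List.cons_append, List.nil_append, List.cons.injEq] at hs
          obtain ⟨hx, -, hw⟩ := hs
          refine ⟨⟨[], a, by simp [hx]⟩, ?_⟩
          obtain ⟨b, r', hb⟩ := isTagged_head htag
          exact ⟨b, r', by rw [← hw, hb]⟩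
      | x :: y :: s, hs =>
          simp only [List.cons_append, List.cons.injEq] at hs
          obtain ⟨hx, hy, hw⟩ := hs
          obtain ⟨⟨s', b, hs'⟩, hr⟩ := ih s t' r hw
          exact ⟨⟨x :: y :: s', b, by simp [hs']⟩, hr⟩

lemma isTagged_window {u : List (Sym α)} (h : IsTagged u) :
    ∀ i n : ℕ, 2 * i + (2 * n + 1) ≤ u.length →
      IsTagged ((u.drop (2 * i)).take (2 * n + 1)) := by
  induction h with
  | single a =>
      intro i n hle
      simp only [List.length_singleton] at hle
      have hi : i = 0 := by omega
      have hn : n = 0 := by omega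
      subst hi hn
      exact IsTagged.single a
  | cons a t htag ih =>
      intro i n hle
      cases i with
      | zero =>
          cases n with
          | zero => exact IsTagged.single a
          | succ n =>
              have h1 : 2 * (n + 1) + 1 = (2 * n + 1) + 1 + 1 := by omega
              simp only [Nat.mul_zero, List.drop_zero] at *
              rw [h1, List.take_succ_cons, List.take_succ_cons]
              have := ih 0 n (by simp only [List.length_cons] at hle; omega)
              simp only [Nat.mul_zero, List.drop_zero] at this
              exact IsTagged.cons a t this
      | succ i =>
          have h1 : 2 * (i + 1) = 2 * i + 1 + 1 := by omega
          rw [h1, List.drop_succ_cons, List.drop_succ_cons]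
          exact ih i n (by simp only [List.length_cons] at hle; omega)

lemma tagged_infix_ww {u : List (Sym α)} {p : List α} (hu : IsTagged u)
    (hinf : u <:+: ww hash p) :
    ∃ q, q <:+: p ∧ 2 * q.length = u.length + 1 ∧ u = ww hash q := by
  obtain ⟨s, t, hst⟩ := hinf
  rcases p with _ | _
  · exfalso
    obtain ⟨a, r, rfl⟩ := isTagged_head hu
    simp at hst
  rename_i pa pl
  set p := pa :: pl
  have hptag : IsTagged (ww hash p) := isTagged_ww hash p (by simp [p])
  obtain ⟨a, r, rfl⟩ := isTagged_head hu
  have hev : s.length % 2 = 0 :=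
    even_of_inl hptag s a (r ++ t) (by rw [← hst]; simp)
  obtain ⟨i, hi⟩ : ∃ i, s.length = 2 * i := ⟨s.length / 2, by omega⟩
  have hlu : (Sum.inl a :: r).length % 2 = 1 := isTagged_length_odd hu
  obtain ⟨n, hn⟩ : ∃ n, (Sum.inl a :: r).length = 2 * n + 1 :=
    ⟨(Sum.inl a :: r).length / 2, by omega⟩
  have hdrop : (ww hash p).drop (2 * i) = (Sum.inl a :: r) ++ t := by
    rw [← hi, ← hst, List.append_assoc]
    exact List.drop_left
  have htake : ((ww hash p).drop (2 * i)).take (2 * n + 1) = Sum.inl a :: r := by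
    rw [hdrop, ← hn]
    exact List.take_left
  have hlen : i + (n + 1) ≤ p.length := by
    have h1 := congrArg List.length hst
    have h2 := length_ww hash p
    have h3 : p.length ≥ 1 := by simp [p]
    have hn' : r.length + 1 = 2 * n + 1 := by simpa using hn
    simp only [List.length_append, List.length_cons] at h1
    omega
  refine ⟨(p.drop i).take (n + 1), ?_, ?_, ?_⟩
  · exact ((p.drop i).take_prefix (n + 1)).isInfix.trans (p.drop_suffix i).isInfix
  · have : ((p.drop i).take (n + 1)).length = n + 1 := by
      simp only [List.length_take, List.length_drop]
      omega
    rw [this, hn]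
    omega
  · rw [← htake, drop_ww, take_ww]

lemma ww_infix_of_infix {q p : List α} (h : q <:+: p) : ww hash q <:+: ww hash p := by
  rcases q with _ | ⟨qa, ql⟩
  · simp
  obtain ⟨s, t, hst⟩ := h
  have h1 : (p.drop s.length).take (qa :: ql).length = qa :: ql := by
    rw [← hst, List.append_assoc, List.drop_left, List.take_left]
  have h2 : ww hash (qa :: ql) =
      ((ww hash p).drop (2 * s.length)).take (2 * ql.length + 1) := by
    rw [drop_ww, take_ww]
    congr 1
    rw [show ql.length + 1 = (qa :: ql).length from rfl, h1]
  rw [h2]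
  exact (List.take_prefix _ _).isInfix.trans (List.drop_suffix _ _).isInfix

end Aux3

section Aux4

variable {α : Type} (hash : α)

lemma ww_head : ∀ (b : α) (l : List α), ∃ r, ww hash (b :: l) = Sum.inl b :: r
  | b, [] => ⟨[], rfl⟩
  | b, c :: l => ⟨_, rfl⟩

lemma ww_tag_next : ∀ (p : List α) (s : List (Sym α)) (tg : Tagg) (a : α) (t : List (Sym α)),
    ww hash p = s ++ Sum.inr tg :: Sum.inl a :: t → ∃ c, tg = mkTag hash c a
  | [], s, tg, a, t, h => by simp at h
  | [b], s, tg, a, t, h => by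
      exfalso
      match s, h with
      | [], h => simp at h
      | x :: s, h =>
          have := congrArg List.length h
          simp only [ww_single, List.length_cons, List.length_append, List.length_nil] at this
          omega
  | b :: c :: l, s, tg, a, t, h => by
      match s, h with
      | [], h => simp at h
      | [x], h =>
          obtain ⟨r, hr⟩ := ww_head hash c l
          rw [ww_cons₂, hr] at h
          simp only [List.cons_append, List.nil_append, List.cons.injEq] at h
          obtain ⟨-, htg, hca, -⟩ := h
          have h1 : tg = mkTag hash b c := (Sum.inr_injective htg).symm
          have h2 : c = a := Sum.inl_injective hca
          exact ⟨b, h2 ▸ h1⟩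
      | x :: y :: s, h =>
          rw [ww_cons₂] at h
          simp only [List.cons_append, List.cons.injEq] at h
          exact ww_tag_next (c :: l) s tg a t h.2.2

lemma ww_tag_prev : ∀ (p : List α) (s : List (Sym α)) (a : α) (tg : Tagg) (t : List (Sym α)),
    ww hash p = s ++ Sum.inl a :: Sum.inr tg :: t → ∃ c, tg = mkTag hash a c
  | [], s, a, tg, t, h => by simp at h
  | [b], s, a, tg, t, h => by
      exfalso
      match s, h with
      | [], h => simp at h
      | x :: s, h =>
          have := congrArg List.length h
          simp only [ww_single, List.length_cons, List.length_append, List.length_nil] at this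
          omega
  | b :: c :: l, s, a, tg, t, h => by
      match s, h with
      | [], h =>
          rw [ww_cons₂] at h
          simp only [List.nil_append, List.cons.injEq] at h
          obtain ⟨hb, htg, -⟩ := h
          have h1 : tg = mkTag hash b c := (Sum.inr_injective htg).symm
          have h2 : b = a := Sum.inl_injective hb
          exact ⟨c, h2 ▸ h1⟩
      | [x], h =>
          rw [ww_cons₂] at h
          simp only [List.cons_append, List.nil_append, List.cons.injEq] at h
          obtain ⟨-, hbad, -⟩ := h
          simp at hbad
      | x :: y :: s, h =>
          rw [ww_cons₂] at h
          simp only [List.cons_append, List.cons.injEq] at h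
          exact ww_tag_prev (c :: l) s a tg t h.2.2

lemma eq_hash_of_mkTag_rb {c a : α} (h : mkTag hash c a = Tagg.rb) : a = hash := by
  unfold mkTag at h
  split_ifs at h <;> simp_all

lemma eq_hash_of_mkTag_lb {a c : α} (h : mkTag hash a c = Tagg.lb) : a = hash := by
  unfold mkTag at h
  split_ifs at h <;> simp_all

lemma phi_shape {j : ℕ} (hj : 1 ≤ j) {F : Set (List α)} {u : List (Sym α)}
    (hu : u ∈ sltPhi hash j F) :
    ∃ p : List α, p.length = j ∧ p ≠ [] ∧ u = ww hash p := by
  rcases hu with ⟨j1, v, j2, hsum, hvne, hvnh, -, rfl⟩ | rfl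
  · have hlen : (List.replicate j1 hash ++ v ++ List.replicate j2 hash).length = j := by
      simp; omega
    exact ⟨List.replicate j1 hash ++ v ++ List.replicate j2 hash, hlen,
      List.ne_nil_of_length_pos (by omega), (ww_bt hash j1 v j2 hvne hvnh).symm⟩
  · refine ⟨List.replicate j hash, by simp, List.ne_nil_of_length_pos (by simp; omega), ?_⟩
    have h1 : (j - 1) + 1 = j := by omega
    rw [← ww_replicate hash (j - 1), h1]

end Aux4

section Aux5

variable {α : Type} (hash : α)

lemma rb_hash {j : ℕ} (hj : 2 ≤ j) {F : Set (List α)} {u : List (Sym α)}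
    (hu : IsTagged u) (hlen : 2 * j - 1 ≤ u.length)
    (hfac : taggedFactors (2 * j - 1) u ⊆ sltPhi hash j F)
    {S T : List (Sym α)} {a : α}
    (hsplit : u = S ++ Sum.inr Tagg.rb :: Sum.inl a :: T) : a = hash := by
  have hodd : S.length % 2 = 1 := odd_of_inr hu S _ _ hsplit
  have hul : u.length = S.length + 2 + T.length := by rw [hsplit]; simp; omega
  set k := 2 * j - 1 with hk
  set e := if k ≤ S.length + 2 then S.length + 2 - k else 0 with he
  have he1 : e ≤ S.length := by rw [he]; split <;> omega
  have he2 : e % 2 = 0 := by rw [he]; split <;> omega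
  have he3 : S.length - e ≤ k - 2 := by rw [he]; split <;> omega
  have he4 : e + k ≤ u.length := by rw [he]; split <;> omega
  obtain ⟨i, hi⟩ : ∃ i, e = 2 * i := ⟨e / 2, by omega⟩
  obtain ⟨n, hn⟩ : ∃ n, k = 2 * n + 1 := ⟨j - 1, by omega⟩
  have hftag : IsTagged ((u.drop e).take k) := by
    rw [hi, hn]; exact isTagged_window hu i n (by omega)
  have hflen : ((u.drop e).take k).length = k := by
    simp only [List.length_take, List.length_drop]; omega
  have hfinf : (u.drop e).take k <:+: u :=
    (List.take_prefix _ _).isInfix.trans (List.drop_suffix _ _).isInfix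
  have hfphi : (u.drop e).take k ∈ sltPhi hash j F := hfac ⟨hflen, hftag, hfinf⟩
  have hfeq : (u.drop e).take k =
      S.drop e ++ Sum.inr Tagg.rb :: Sum.inl a :: T.take (k - (S.length - e) - 2) := by
    rw [hsplit, List.drop_append, Nat.sub_eq_zero_of_le he1, List.drop_zero,
      List.take_append,
      List.take_of_length_le (by simp only [List.length_drop]; omega),
      List.length_drop,
      show k - (S.length - e) = (k - (S.length - e) - 2) + 1 + 1 by omega,
      List.take_succ_cons, List.take_succ_cons]
    rw [show k - (S.length - e) - 2 + 1 + 1 - 2 = k - (S.length - e) - 2 by omega]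
  obtain ⟨p, -, -, hp⟩ := phi_shape hash (by omega) hfphi
  rw [hp] at hfeq
  obtain ⟨c, hc⟩ := ww_tag_next hash p _ _ _ _ hfeq
  exact eq_hash_of_mkTag_rb hash hc.symm

lemma lb_hash {j : ℕ} (hj : 2 ≤ j) {F : Set (List α)} {u : List (Sym α)}
    (hu : IsTagged u) (hlen : 2 * j - 1 ≤ u.length)
    (hfac : taggedFactors (2 * j - 1) u ⊆ sltPhi hash j F)
    {S T : List (Sym α)} {a : α}
    (hsplit : u = S ++ Sum.inl a :: Sum.inr Tagg.lb :: T) : a = hash := by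
  have hs2 : u = (S ++ [Sum.inl a]) ++ Sum.inr Tagg.lb :: T := by rw [hsplit]; simp
  obtain ⟨-, b, T', hT⟩ := tag_context hu _ _ _ hs2
  have hodd : (S ++ [Sum.inl a]).length % 2 = 1 := odd_of_inr hu _ _ _ hs2
  have hSev : S.length % 2 = 0 := by simp at hodd; omega
  have hul : u.length = S.length + 2 + T.length := by rw [hsplit]; simp; omega
  have hT1 : 1 ≤ T.length := by rw [hT]; simp
  set k := 2 * j - 1 with hk
  set e := if k ≤ S.length + 3 then S.length + 3 - k else 0 with he
  have he1 : e ≤ S.length := by rw [he]; split <;> omega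
  have he2 : e % 2 = 0 := by rw [he]; split <;> omega
  have he3 : S.length - e ≤ k - 3 := by rw [he]; split <;> omega
  have he4 : e + k ≤ u.length := by rw [he]; split <;> omega
  obtain ⟨i, hi⟩ : ∃ i, e = 2 * i := ⟨e / 2, by omega⟩
  obtain ⟨n, hn⟩ : ∃ n, k = 2 * n + 1 := ⟨j - 1, by omega⟩
  have hftag : IsTagged ((u.drop e).take k) := by
    rw [hi, hn]; exact isTagged_window hu i n (by omega)
  have hflen : ((u.drop e).take k).length = k := by
    simp only [List.length_take, List.length_drop]; omega
  have hfinf : (u.drop e).take k <:+: u :=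
    (List.take_prefix _ _).isInfix.trans (List.drop_suffix _ _).isInfix
  have hfphi : (u.drop e).take k ∈ sltPhi hash j F := hfac ⟨hflen, hftag, hfinf⟩
  have hfeq : (u.drop e).take k =
      S.drop e ++ Sum.inl a :: Sum.inr Tagg.lb :: T.take (k - (S.length - e) - 2) := by
    rw [hsplit, List.drop_append, Nat.sub_eq_zero_of_le he1, List.drop_zero,
      List.take_append,
      List.take_of_length_le (by simp only [List.length_drop]; omega),
      List.length_drop,
      show k - (S.length - e) = (k - (S.length - e) - 2) + 1 + 1 by omega,
      List.take_succ_cons, List.take_succ_cons]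
    rw [show k - (S.length - e) - 2 + 1 + 1 - 2 = k - (S.length - e) - 2 by omega]
  obtain ⟨p, -, -, hp⟩ := phi_shape hash (by omega) hfphi
  rw [hp] at hfeq
  obtain ⟨c, hc⟩ := ww_tag_prev hash p _ _ _ _ hfeq
  exact eq_hash_of_mkTag_lb hash hc.symm

end Aux5

section Aux6

variable {α : Type} (hash : α)

lemma ww_of_dots {w : List (Sym α)} (hw : IsTagged w) (hnh : Sum.inl hash ∉ w)
    (hdot : ∀ (s : List (Sym α)) (tg : Tagg) (r : List (Sym α)),
      w = s ++ Sum.inr tg :: r → tg = Tagg.dot) :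
    w = ww hash (erase w) := by
  induction hw with
  | single a => simp [erase]
  | cons a t htag ih =>
      rename_i w'
      have ht : t = Tagg.dot := hdot [Sum.inl a] t w' rfl
      have hnh' : Sum.inl hash ∉ w' := fun h => hnh (by simp [h])
      have hw' : w' = ww hash (erase w') := ih hnh'
        (fun s tg r h => hdot (Sum.inl a :: Sum.inr t :: s) tg r (by simp [h]))
      obtain ⟨b, r, hb⟩ := isTagged_head htag
      have ha : a ≠ hash := fun h => hnh (by simp [h])
      have hbh : b ≠ hash := by
        intro h
        exact hnh' (by rw [hb, h]; simp)
      have herase : erase (Sum.inl a :: Sum.inr t :: w') = a :: erase w' := by simp [erase, List.filterMap_cons, Sum.getLeft?]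
      have herase' : erase w' = b :: erase r := by rw [hb]; simp [erase]
      rw [herase, herase', ww_cons₂, show mkTag hash a b = Tagg.dot from by
        simp [mkTag, ha, hbh], ht, ← herase', ← hw']

lemma endwFor_eq {j : ℕ} (hj : 2 ≤ j) : endwFor hash (2 * j - 1) = hashWord hash (j - 2) := by
  rw [endwFor, show (2 * j - 1 - 3) / 2 = j - 2 by omega]

lemma eq_ww_of_locfull {j : ℕ} (hj : 2 ≤ j) {F : Set (List α)} {w : List (Sym α)}
    (hw : IsTagged w) (hnh : Sum.inl hash ∉ w)
    (hloc : wrap hash (2 * j - 1) w ∈ LocFull (2 * j - 1) (sltPhi hash j F)) :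
    w = ww hash (erase w) := by
  obtain ⟨htag, hfac⟩ := hloc
  have hew : (endwFor hash (2 * j - 1)).length = 2 * (j - 2) + 1 := by
    rw [endwFor_eq hash hj, length_hashWord]
  have hwne : w.length ≥ 1 := by
    obtain ⟨a, r, rfl⟩ := isTagged_head hw; simp
  have hlen : 2 * j - 1 ≤ (wrap hash (2 * j - 1) w).length := by
    simp only [wrap, List.length_append, List.length_cons, hew]; omega
  have hdot : ∀ (s : List (Sym α)) (tg : Tagg) (r : List (Sym α)),
      w = s ++ Sum.inr tg :: r → tg = Tagg.dot := by
    intro s tg r hsr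
    obtain ⟨⟨s', b, hs'⟩, c, r', hr'⟩ := tag_context hw s tg r hsr
    cases tg with
    | dot => rfl
    | rb =>
        exfalso
        have hsplit : wrap hash (2 * j - 1) w =
            (endwFor hash (2 * j - 1) ++ Sum.inr Tagg.lb :: s) ++
              Sum.inr Tagg.rb :: Sum.inl c ::
                (r' ++ Sum.inr Tagg.rb :: endwFor hash (2 * j - 1)) := by
          simp [wrap, hsr, hr']
        have := rb_hash hash hj htag hlen hfac hsplit
        exact hnh (by rw [hsr, hr', this]; simp)
    | lb =>
        exfalso
        have hsplit : wrap hash (2 * j - 1) w =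
            (endwFor hash (2 * j - 1) ++ Sum.inr Tagg.lb :: s') ++
              Sum.inl b :: Sum.inr Tagg.lb ::
                (r ++ Sum.inr Tagg.rb :: endwFor hash (2 * j - 1)) := by
          simp [wrap, hsr, hs']
        have := lb_hash hash hj htag hlen hfac hsplit
        exact hnh (by rw [hsr, hs', this]; simp)
  exact ww_of_dots hash hw hnh hdot

lemma wrap_ww {j : ℕ} (hj : 2 ≤ j) {x : List α} (hx : x ≠ []) (hnh : hash ∉ x) :
    wrap hash (2 * j - 1) (ww hash x) =
      ww hash (List.replicate (j - 1) hash ++ x ++ List.replicate (j - 1) hash) := by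
  rw [ww_bt hash (j - 1) x (j - 1) hx hnh]
  unfold wrap bt
  rw [endwFor_eq hash hj, ww_eq_tilde hash x hnh, show j - 1 = (j - 2) + 1 by omega]
  simp only [hpre, hsuf]
  simp [List.append_assoc]

lemma finalWord_eq {j : ℕ} (hj : 2 ≤ j) :
    finalWord hash (2 * j - 1) = ww hash (List.replicate (2 * j - 2) hash) := by
  unfold finalWord
  rw [endwFor_eq hash hj, hashWord_append, ← ww_replicate hash ((j - 2) + (j - 2) + 1),
      show (j - 2) + (j - 2) + 1 + 1 = 2 * j - 2 by omega]

lemma window_decomp {x : List α} (hx : x ≠ []) (hnh : hash ∉ x) {m : ℕ} {q : List α}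
    (hq : q <:+: (List.replicate m hash ++ x ++ List.replicate m hash))
    (hlen : q.length = m + 1) :
    ∃ j1 v j2, v ≠ [] ∧ hash ∉ v ∧ j1 + v.length + j2 = m + 1 ∧
      q = List.replicate j1 hash ++ v ++ List.replicate j2 hash := by
  obtain ⟨s, t, hst⟩ := hq
  have hL1 : 1 ≤ x.length := List.length_pos_iff.mpr hx
  have htot : s.length + (m + 1) + t.length = m + x.length + m := by
    have := congrArg List.length hst
    simp only [List.length_append, List.length_replicate, hlen] at this
    omega
  have hqe : q =
      ((List.replicate m hash ++ x ++ List.replicate m hash).drop s.length).take (m + 1) := by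
    rw [← hst, List.append_assoc, List.drop_left, ← hlen, List.take_left]
  rw [List.drop_append, List.drop_append,
      List.drop_replicate, List.drop_replicate,
      List.take_append, List.take_append,
      List.take_replicate, List.take_replicate] at hqe
  simp only [List.length_append, List.length_replicate, List.length_take,
      List.length_drop] at hqe
  set i := s.length with hidef
  set L := x.length with hLdef
  have e1 : (m + 1) ⊓ (m - i) = m - i := by omega
  set v := List.take (m + 1 - (m - i)) (List.drop (i - m) x) with hv
  have hvlen : v.length = (m + 1 - (m - i)) ⊓ (L - (i - m)) := by
    rw [hv]; simp only [List.length_take, List.length_drop]; rfl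
  have e2 : (m + 1 - (m - i + (L - (i - m)))) ⊓ (m - (i - (m + L))) =
      m + 1 - (m - i) - v.length := by omega
  rw [e1, e2] at hqe
  refine ⟨m - i, v, m + 1 - (m - i) - v.length, ?_, ?_, by omega, hqe⟩
  · exact List.ne_nil_of_length_pos (by omega)
  · intro h
    exact hnh (List.drop_subset _ _ (List.take_subset _ _ h))

end Aux6

section Main

variable {α : Type} (hash : α)

lemma handle_ww {x : List α} (hx : x ≠ []) (hnh : hash ∉ x) :
    IsHandleBody hash (ww hash x) := by
  refine ⟨isTagged_ww hash x hx, fun t ht => tag_mem_ww hash x hnh t ht, fun h => hnh ?_⟩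
  have := mem_erase_of_inl h
  rwa [erase_ww] at this

lemma finalWord_locfull {j : ℕ} (hj : 2 ≤ j) (F : Set (List α)) :
    finalWord hash (2 * j - 1) ∈ LocFull (2 * j - 1) (sltPhi hash j F) := by
  rw [finalWord_eq hash hj]
  refine ⟨isTagged_ww hash _ (List.ne_nil_of_length_pos (by simp; omega)), ?_⟩
  rintro u ⟨hul, hut, huinf⟩
  obtain ⟨q, hqinf, hqlen, rfl⟩ := tagged_infix_ww hash hut huinf
  have hql : q.length = j := by omega
  have hq : q = List.replicate j hash := by
    have hmem : ∀ b ∈ q, b = hash := fun b hb => List.eq_of_mem_replicate (hqinf.subset hb)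
    rw [← hql]; exact List.eq_replicate_of_mem hmem
  refine Or.inr ?_
  rw [hq, ← ww_replicate hash (j - 1), show (j - 1) + 1 = j by omega]

lemma wrap_locfull {j : ℕ} (hj : 2 ≤ j) {F : Set (List α)} {x : List α}
    (hx : x ≠ []) (hnh : hash ∉ x)
    (hfac : plainFactors j
      (List.replicate (j - 1) hash ++ x ++ List.replicate (j - 1) hash) ⊆ F) :
    wrap hash (2 * j - 1) (ww hash x) ∈ LocFull (2 * j - 1) (sltPhi hash j F) := by
  rw [wrap_ww hash hj hx hnh]
  have hbigne : List.replicate (j - 1) hash ++ x ++ List.replicate (j - 1) hash ≠ [] := by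
    simp [hx]
  refine ⟨isTagged_ww hash _ hbigne, ?_⟩
  rintro u ⟨hul, hut, huinf⟩
  obtain ⟨q, hqinf, hqlen, rfl⟩ := tagged_infix_ww hash hut huinf
  have hql : q.length = j := by omega
  obtain ⟨j1, v, j2, hvne, hvnh, hsum, hqe⟩ :=
    window_decomp hash hx hnh (m := j - 1) hqinf (by omega)
  have hqF : q ∈ F := hfac ⟨hql, hqinf⟩
  refine Or.inl ⟨j1, v, j2, by omega, hvne, hvnh, ?_, ?_⟩
  · rw [← hqe]; exact hqF
  · rw [← ww_bt hash j1 v j2 hvne hvnh, ← hqe]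

open Classical in
/-- Number of occurrences of the end-mark among the terminals. -/
noncomputable def cnt : List (Sym α) → ℕ
  | [] => 0
  | Sum.inl a :: l => (if a = hash then 1 else 0) + cnt l
  | Sum.inr _ :: l => cnt l

@[simp] lemma cnt_cons_inr (t : Tagg) (l : List (Sym α)) :
    cnt hash (Sum.inr t :: l) = cnt hash l := rfl

lemma cnt_append : ∀ l1 l2 : List (Sym α), cnt hash (l1 ++ l2) = cnt hash l1 + cnt hash l2
  | [], l2 => by simp [cnt]
  | Sum.inl a :: l1, l2 => by
      have ih := cnt_append l1 l2
      simp only [List.cons_append, List.append_eq, cnt] at *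
      omega
  | Sum.inr t :: l1, l2 => by
      simp only [List.cons_append, cnt_cons_inr, cnt_append l1 l2]

lemma cnt_zero_of_not_mem : ∀ l : List (Sym α), Sum.inl hash ∉ l → cnt hash l = 0
  | [], _ => rfl
  | Sum.inl a :: l, h => by
      have ha : a ≠ hash := fun h' => h (by simp [h'])
      simp [cnt, ha, cnt_zero_of_not_mem l (fun h' => h (by simp [h']))]
  | Sum.inr t :: l, h => by
      simp [cnt, cnt_zero_of_not_mem l (fun h' => h (by simp [h']))]

lemma not_mem_of_cnt_zero : ∀ l : List (Sym α), cnt hash l = 0 → Sum.inl hash ∉ l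
  | [], _ => by simp
  | Sum.inl a :: l, h => by
      have h2 : a ≠ hash ∧ cnt hash l = 0 := by
        by_cases ha : a = hash
        · simp [cnt, ha] at h
        · simp [cnt, ha] at h; exact ⟨ha, h⟩
      intro hm
      rcases List.mem_cons.mp hm with h3 | h3
      · exact h2.1 (Sum.inl_injective h3).symm
      · exact not_mem_of_cnt_zero l h2.2 h3
  | Sum.inr t :: l, h => by
      intro hm
      rcases List.mem_cons.mp hm with h3 | h3
      · simp at h3
      · exact not_mem_of_cnt_zero l (by simpa [cnt] using h) h3

end Main

/-- **Theorem 2, inclusion SLT ⊆ maxtag**: every `j`-strictly-locally-testable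
language (`j ≥ 2`) is a maximal language of order `k = 2j-1`, via the
non-conflictual tagged `k`-word set obtained from `F_j` as described. -/
theorem slt_subset_maxtag {α : Type} (hash : α) {j : ℕ} (hj : 2 ≤ j)
    (F : Set (List α)) (hF : ∀ u ∈ F, u.length = j) :
    TaggedKWords (2 * j - 1) (sltPhi hash j F) ∧
    NonConflictual (sltPhi hash j F) ∧
    LocPlain hash j F = Red hash (2 * j - 1) (sltPhi hash j F) := by
  have hj1 : 1 ≤ j := by omega
  refine ⟨?_, ?_, ?_⟩
  · intro u hu
    obtain ⟨p, hpl, hpne, rfl⟩ := phi_shape hash hj1 hu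
    exact ⟨isTagged_ww hash p hpne, by rw [length_ww, hpl]⟩
  · rintro ⟨u, hu, v, hv, hne, herase⟩
    obtain ⟨p, -, -, rfl⟩ := phi_shape hash hj1 hu
    obtain ⟨p', -, -, rfl⟩ := phi_shape hash hj1 hv
    apply hne
    rw [erase_ww, erase_ww] at herase
    rw [herase]
  · ext x
    constructor
    · rintro ⟨hne, hnh, hfac⟩
      refine ⟨ww hash x, ⟨isTagged_ww hash x hne, Relation.ReflTransGen.single ?_⟩,
        erase_ww hash x⟩
      exact ⟨endwFor hash (2 * j - 1), ww hash x, endwFor hash (2 * j - 1), Tagg.dot,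
        handle_ww hash hne hnh, rfl, rfl, wrap_locfull hash hj hne hnh hfac,
        finalWord_locfull hash hj F⟩
    · rintro ⟨w, ⟨hwt, hred⟩, rfl⟩
      have hlbmem : Sum.inr Tagg.lb ∈ wrap hash (2 * j - 1) w := by simp [wrap]
      have hfin_ne : wrap hash (2 * j - 1) w ≠ finalWord hash (2 * j - 1) := by
        intro h
        rw [h, finalWord_eq hash hj, show 2 * j - 2 = (2 * j - 3) + 1 by omega,
          ww_replicate] at hlbmem
        rcases mem_hashWord hash _ _ hlbmem with h' | h' <;> simp at h'
      have hloc : wrap hash (2 * j - 1) w ∈ LocFull (2 * j - 1) (sltPhi hash j F) := by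
        rcases Relation.ReflTransGen.cases_head hred with h | ⟨c, hstep, -⟩
        · exact absurd h hfin_ne
        · obtain ⟨w', x', z', s, -, -, -, huloc, -⟩ := hstep
          exact huloc
      have hcnt : ∀ {u v : List (Sym α)}, RStep hash (2 * j - 1) (sltPhi hash j F) u v →
          cnt hash u = cnt hash v := by
        intro u v h
        obtain ⟨w', x', z', s, ⟨-, -, hxh⟩, hue, hve, -, -⟩ := h
        subst hue; subst hve
        rw [cnt_append, cnt_cons_inr, cnt_append, cnt_cons_inr, cnt_append, cnt_cons_inr,
          cnt_zero_of_not_mem hash x' hxh]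
        omega
      have hcnt2 : cnt hash (wrap hash (2 * j - 1) w)
          = cnt hash (finalWord hash (2 * j - 1)) := by
        have hgen : ∀ z, Reduces hash (2 * j - 1) (sltPhi hash j F)
            (wrap hash (2 * j - 1) w) z →
            cnt hash (wrap hash (2 * j - 1) w) = cnt hash z := by
          intro z hz
          induction hz with
          | refl => rfl
          | tail h1 h2 ih => rw [ih, hcnt h2]
        exact hgen _ hred
      have hw0 : cnt hash w = 0 := by
        simp only [wrap, finalWord, cnt_append, cnt_cons_inr] at hcnt2
        omega
      have hnhw : Sum.inl hash ∉ w := not_mem_of_cnt_zero hash w hw0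
      have hxnh : hash ∉ erase w := fun h => hnhw (inl_mem_of_mem_erase h)
      have hww := eq_ww_of_locfull hash hj hwt hnhw hloc
      have hxne : erase w ≠ [] := erase_ne_nil hwt
      refine ⟨hxne, hxnh, ?_⟩
      rintro y ⟨hyl, hyinf⟩
      have hyne : y ≠ [] := by
        intro h; rw [h] at hyl; simp at hyl; omega
      have hbig : wrap hash (2 * j - 1) w =
          ww hash (List.replicate (j - 1) hash ++ erase w ++ List.replicate (j - 1) hash) := by
        conv_lhs => rw [hww]
        exact wrap_ww hash hj hxne hxnh
      have hmem : ww hash y ∈ taggedFactors (2 * j - 1) (wrap hash (2 * j - 1) w) := by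
        refine ⟨by rw [length_ww]; omega, isTagged_ww hash y hyne, ?_⟩
        rw [hbig]; exact ww_infix_of_infix hash hyinf
      rcases hloc.2 hmem with ⟨j1, v, j2, hsum, hvne, hvnh, hFm, hbt⟩ | hhash
      · have hy : y = List.replicate j1 hash ++ v ++ List.replicate j2 hash := by
          have h2 : ww hash y = ww hash
              (List.replicate j1 hash ++ v ++ List.replicate j2 hash) := by
            rw [hbt, ww_bt hash j1 v j2 hvne hvnh]
          have h3 := congrArg erase h2
          rwa [erase_ww, erase_ww] at h3
        rw [hy]; exact hFm
      · exfalso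
        have hy : y = List.replicate j hash := by
          rw [← ww_replicate hash (j - 1), show (j - 1) + 1 = j by omega] at hhash
          have h3 := congrArg erase hhash
          rwa [erase_ww, erase_ww] at h3
        obtain ⟨j1, v, j2, hvne, hvnh, -, hdec⟩ :=
          window_decomp hash hxne hxnh (m := j - 1) hyinf (by omega)
        obtain ⟨c, hc⟩ := List.exists_mem_of_ne_nil v hvne
        have hcy : c ∈ y := by rw [hdec]; simp [hc]
        rw [hy] at hcy
        exact hvnh (List.eq_of_mem_replicate hcy ▸ hc)

end HOP
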